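/- For every M > 0, the 3×3 real matrix C_M = [[0, 2, 0], [−M, 0, 1], [2M, −2M, 0]], which is the coefficient matrix of the linear ODE system A_{2,0}' = 2A_{1,1}, A_{1,1}' = A_{0,2} − M A_{2,0}, A_{0,2}' = 2M(M + A_{2,0} − A_{1,1}), has at least one eigenvalue with positive real part. Moreover, the unique steady state of this system, namely the solution of 2A_{1,1} = 0, A_{0,2} = M A_{2,0}, M + A_{2,0} − A_{1,1} = 0, has negative A_{2,0}- and A_{0,2}-components. -/
import Mathlib


/-- The coefficient matrix of the second-order moment system of Model B,
unknowns ordered as `(A_{2,0}, A_{1,1}, A_{0,2})`. -/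
noncomputable def CmatB (M : ℝ) : Matrix (Fin 3) (Fin 3) ℝ :=
  !![0, 2, 0; -M, 0, 1; 2 * M, -2 * M, 0]

lemma charpoly_eval_CmatB (M : ℝ) (z : ℂ) :
    (Matrix.charpoly ((CmatB M).map (Complex.ofReal))).eval z
      = z^3 + 4*M*z - 4*M := by
  simp [Matrix.charpoly, Matrix.det_fin_three, CmatB, Matrix.charmatrix_apply]
  ring

/-- For every `M > 0`, `C_M` has at least one (complex) eigenvalue with positive real
part, and the unique steady state of the associated affine system has negative
`A_{2,0}`- and `A_{0,2}`-components. -/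
theorem modelB_always_unstable (M : ℝ) (hM : 0 < M) :
    (∃ z : ℂ,
      (Matrix.charpoly ((CmatB M).map (Complex.ofReal))).IsRoot z ∧ 0 < z.re) ∧
    (∀ a b c : ℝ, 2 * b = 0 → c - M * a = 0 → 2 * M * (M + a - b) = 0 →
      a < 0 ∧ c < 0) := by
  constructor
  · -- find a positive real root of x^3 + 4Mx - 4M by IVT
    set f : ℝ → ℝ := fun x => x^3 + 4*M*x - 4*M with hf
    have hcont : ContinuousOn f (Set.Icc 0 (M+1)) := by fun_prop
    have h0 : f 0 < 0 := by simp [hf]; linarith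
    have h1 : 0 < f (M+1) := by
      have : f (M+1) = (M+1)^3 + 4*M^2 := by simp [hf]; ring
      nlinarith
    have hsub : Set.Icc (f 0) (f (M+1)) ⊆ f '' Set.Icc 0 (M+1) :=
      intermediate_value_Icc (by linarith) hcont
    have h0mem : (0:ℝ) ∈ Set.Icc (f 0) (f (M+1)) := ⟨le_of_lt h0, le_of_lt h1⟩
    obtain ⟨r, hr, hfr⟩ := hsub h0mem
    have hrpos : 0 < r := by
      rcases lt_or_eq_of_le hr.1 with h | h
      · exact h
      · exfalso; rw [← h] at hfr; linarith
    refine ⟨(r : ℂ), ?_, by simpa using hrpos⟩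
    unfold Polynomial.IsRoot
    rw [charpoly_eval_CmatB]
    have : ((r:ℂ)^3 + 4*M*r - 4*M) = ((f r : ℝ) : ℂ) := by
      simp only [hf]
      push_cast
      ring
    rw [this, hfr]
    simp
  · intro a b c h1 h2 h3
    have hb : b = 0 := by linarith
    have ha : a = -M := by
      have := mul_eq_zero.mp h3
      rcases this with h | h
      · linarith
      · linarith
    have hc : c = M * a := by linarith
    constructor
    · rw [ha]; linarith
    · rw [hc, ha]; nlinarith
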